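/- Under the disentanglement assumptions, the cross-view mutual information is bounded below by the mutual information between the two pose representations: I(x^i; z_p^j, z_v^i) ≥ I(z_p^i; z_p^j). -/

import Mathlib

open Finset

private lemma sw_sum {α β : Type*} [Fintype α] [Fintype β] (f : α → β → ℝ) :
    ∑ a, ∑ b, f a b = ∑ b, ∑ a, f a b := Finset.sum_comm

private lemma sle_sum {ι : Type*} [Fintype ι] {f : ι → ℝ} (h : ∀ i, 0 ≤ f i) (i : ι) :
    f i ≤ ∑ j, f j := Finset.single_le_sum (fun j _ => h j) (Finset.mem_univ i)

theorem stmt_7 {X A V B : Type*} [Fintype X] [Fintype A] [Fintype V] [Fintype B]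
    (p : X → A → V → B → ℝ)
    (hnn : ∀ x a v b, 0 ≤ p x a v b)
    (hsum : ∑ x, ∑ a, ∑ v, ∑ b, p x a v b = 1)
    (pX : X → ℝ) (pA : A → ℝ) (pV : V → ℝ) (pB : B → ℝ)
    (pXB : X → B → ℝ) (pXV : X → V → ℝ) (pXAV : X → A → V → ℝ)
    (pXBV : X → B → V → ℝ) (pAB : A → B → ℝ) (pAV : A → V → ℝ) (pBV : B → V → ℝ)
    (hpX : ∀ x, pX x = ∑ a, ∑ v, ∑ b, p x a v b)
    (hpA : ∀ a, pA a = ∑ x, ∑ v, ∑ b, p x a v b)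
    (hpV : ∀ v, pV v = ∑ x, ∑ a, ∑ b, p x a v b)
    (hpB : ∀ b, pB b = ∑ x, ∑ a, ∑ v, p x a v b)
    (hpXB : ∀ x b, pXB x b = ∑ a, ∑ v, p x a v b)
    (hpXV : ∀ x v, pXV x v = ∑ a, ∑ b, p x a v b)
    (hpXAV : ∀ x a v, pXAV x a v = ∑ b, p x a v b)
    (hpXBV : ∀ x b v, pXBV x b v = ∑ a, p x a v b)
    (hpAB : ∀ a b, pAB a b = ∑ x, ∑ v, p x a v b)
    (hpAV : ∀ a v, pAV a v = ∑ x, ∑ b, p x a v b)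
    (hpBV : ∀ b v, pBV b v = ∑ x, ∑ a, p x a v b)
    -- Markov: `z_p^j` is conditionally independent of `(z_p^i, z_v^i)` given `x^i`
    (hmarkov : ∀ x a v b, 0 < pX x → p x a v b * pX x = pXAV x a v * pXB x b)
    -- independence of `z_p^j` and `z_v^i`, marginally and conditionally on `x^i`
    (hindep : ∀ b v, pBV b v = pB b * pV v)
    (hcond : ∀ x b v, 0 < pX x → pXBV x b v * pX x = pXB x b * pXV x v)
    -- in particular `I(z_v^i; z_p^j) = 0` and `I(z_p^i; z_v^i) = 0`
    (hIvb : ∑ b, ∑ v, pBV b v * Real.log (pBV b v / (pB b * pV v)) = 0)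
    (hIav : ∑ a, ∑ v, pAV a v * Real.log (pAV a v / (pA a * pV v)) = 0) :
    ∑ a, ∑ b, pAB a b * Real.log (pAB a b / (pA a * pB b))
      ≤ ∑ x, ∑ b, ∑ v, pXBV x b v * Real.log (pXBV x b v / (pX x * pBV b v)) := by
  classical
  -- nonnegativity of marginals
  have hXnn : ∀ x, 0 ≤ pX x := fun x => by
    rw [hpX]
    exact Finset.sum_nonneg fun _ _ => Finset.sum_nonneg fun _ _ =>
      Finset.sum_nonneg fun _ _ => hnn _ _ _ _
  have hAnn : ∀ a, 0 ≤ pA a := fun a => by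
    rw [hpA]
    exact Finset.sum_nonneg fun _ _ => Finset.sum_nonneg fun _ _ =>
      Finset.sum_nonneg fun _ _ => hnn _ _ _ _
  have hVnn : ∀ v, 0 ≤ pV v := fun v => by
    rw [hpV]
    exact Finset.sum_nonneg fun _ _ => Finset.sum_nonneg fun _ _ =>
      Finset.sum_nonneg fun _ _ => hnn _ _ _ _
  have hABnn : ∀ a b, 0 ≤ pAB a b := fun a b => by
    rw [hpAB]
    exact Finset.sum_nonneg fun _ _ => Finset.sum_nonneg fun _ _ => hnn _ _ _ _
  have hXVnn : ∀ x v, 0 ≤ pXV x v := fun x v => by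
    rw [hpXV]
    exact Finset.sum_nonneg fun _ _ => Finset.sum_nonneg fun _ _ => hnn _ _ _ _
  have hXAVnn : ∀ x a v, 0 ≤ pXAV x a v := fun x a v => by
    rw [hpXAV]; exact Finset.sum_nonneg fun _ _ => hnn _ _ _ _
  have hQnn : ∀ x a v b,
      0 ≤ pXAV x a v * pX x * pV v * pAB a b / (pXV x v * pA a) := fun x a v b =>
    div_nonneg
      (mul_nonneg (mul_nonneg (mul_nonneg (hXAVnn x a v) (hXnn x)) (hVnn v)) (hABnn a b))
      (mul_nonneg (hXVnn x v) (hAnn a))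
  -- marginal consistency
  have hXVmarg : ∀ x v, ∑ a, pXAV x a v = pXV x v := fun x v => by
    rw [hpXV]; exact Finset.sum_congr rfl fun a _ => hpXAV x a v
  have hABmarg : ∀ a, ∑ b, pAB a b = pA a := fun a => by
    rw [hpA]
    calc ∑ b, pAB a b = ∑ b, ∑ x, ∑ v, p x a v b :=
          Finset.sum_congr rfl fun b _ => hpAB a b
      _ = ∑ x, ∑ b, ∑ v, p x a v b := sw_sum _
      _ = ∑ x, ∑ v, ∑ b, p x a v b := Finset.sum_congr rfl fun x _ => sw_sum _
  have hX1 : ∑ x, pX x = 1 := by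
    calc ∑ x, pX x = ∑ x, ∑ a, ∑ v, ∑ b, p x a v b :=
          Finset.sum_congr rfl fun x _ => hpX x
      _ = 1 := hsum
  have hV1 : ∑ v, pV v = 1 := by
    calc ∑ v, pV v = ∑ v, ∑ x, ∑ a, ∑ b, p x a v b :=
          Finset.sum_congr rfl fun v _ => hpV v
      _ = ∑ x, ∑ v, ∑ a, ∑ b, p x a v b := sw_sum _
      _ = ∑ x, ∑ a, ∑ v, ∑ b, p x a v b := Finset.sum_congr rfl fun x _ => sw_sum _
      _ = 1 := hsum
  -- the key pointwise inequality
  have key : ∀ x a v b,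
      p x a v b * Real.log (pAB a b / (pA a * pB b)) +
        (p x a v b - pXAV x a v * pX x * pV v * pAB a b / (pXV x v * pA a))
      ≤ p x a v b * Real.log (pXBV x b v / (pX x * pBV b v)) := by
    intro x a v b
    rcases (hnn x a v b).eq_or_lt with h0 | hp
    · rw [← h0]
      have := hQnn x a v b
      simp only [zero_mul, zero_add, zero_sub]
      linarith
    · -- positivity of all marginals on the support
      have hX : 0 < pX x := by
        rw [hpX]
        refine hp.trans_le ?_
        calc p x a v b ≤ ∑ b', p x a v b' :=
              sle_sum (f := fun b' => p x a v b') (fun _ => hnn _ _ _ _) b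
          _ ≤ ∑ v', ∑ b', p x a v' b' :=
              sle_sum (f := fun v' => ∑ b', p x a v' b')
                (fun _ => Finset.sum_nonneg fun _ _ => hnn _ _ _ _) v
          _ ≤ ∑ a', ∑ v', ∑ b', p x a' v' b' :=
              sle_sum (f := fun a' => ∑ v', ∑ b', p x a' v' b')
                (fun _ => Finset.sum_nonneg fun _ _ =>
                  Finset.sum_nonneg fun _ _ => hnn _ _ _ _) a
      have hA : 0 < pA a := by
        rw [hpA]
        refine hp.trans_le ?_
        calc p x a v b ≤ ∑ b', p x a v b' :=
              sle_sum (f := fun b' => p x a v b') (fun _ => hnn _ _ _ _) b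
          _ ≤ ∑ v', ∑ b', p x a v' b' :=
              sle_sum (f := fun v' => ∑ b', p x a v' b')
                (fun _ => Finset.sum_nonneg fun _ _ => hnn _ _ _ _) v
          _ ≤ ∑ x', ∑ v', ∑ b', p x' a v' b' :=
              sle_sum (f := fun x' => ∑ v', ∑ b', p x' a v' b')
                (fun _ => Finset.sum_nonneg fun _ _ =>
                  Finset.sum_nonneg fun _ _ => hnn _ _ _ _) x
      have hV : 0 < pV v := by
        rw [hpV]
        refine hp.trans_le ?_
        calc p x a v b ≤ ∑ b', p x a v b' :=
              sle_sum (f := fun b' => p x a v b') (fun _ => hnn _ _ _ _) b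
          _ ≤ ∑ a', ∑ b', p x a' v b' :=
              sle_sum (f := fun a' => ∑ b', p x a' v b')
                (fun _ => Finset.sum_nonneg fun _ _ => hnn _ _ _ _) a
          _ ≤ ∑ x', ∑ a', ∑ b', p x' a' v b' :=
              sle_sum (f := fun x' => ∑ a', ∑ b', p x' a' v b')
                (fun _ => Finset.sum_nonneg fun _ _ =>
                  Finset.sum_nonneg fun _ _ => hnn _ _ _ _) x
      have hB : 0 < pB b := by
        rw [hpB]
        refine hp.trans_le ?_
        calc p x a v b ≤ ∑ v', p x a v' b :=
              sle_sum (f := fun v' => p x a v' b) (fun _ => hnn _ _ _ _) v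
          _ ≤ ∑ a', ∑ v', p x a' v' b :=
              sle_sum (f := fun a' => ∑ v', p x a' v' b)
                (fun _ => Finset.sum_nonneg fun _ _ => hnn _ _ _ _) a
          _ ≤ ∑ x', ∑ a', ∑ v', p x' a' v' b :=
              sle_sum (f := fun x' => ∑ a', ∑ v', p x' a' v' b)
                (fun _ => Finset.sum_nonneg fun _ _ =>
                  Finset.sum_nonneg fun _ _ => hnn _ _ _ _) x
      have hAB : 0 < pAB a b := by
        rw [hpAB]
        refine hp.trans_le ?_
        calc p x a v b ≤ ∑ v', p x a v' b :=
              sle_sum (f := fun v' => p x a v' b) (fun _ => hnn _ _ _ _) v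
          _ ≤ ∑ x', ∑ v', p x' a v' b :=
              sle_sum (f := fun x' => ∑ v', p x' a v' b)
                (fun _ => Finset.sum_nonneg fun _ _ => hnn _ _ _ _) x
      have hXV : 0 < pXV x v := by
        rw [hpXV]
        refine hp.trans_le ?_
        calc p x a v b ≤ ∑ b', p x a v b' :=
              sle_sum (f := fun b' => p x a v b') (fun _ => hnn _ _ _ _) b
          _ ≤ ∑ a', ∑ b', p x a' v b' :=
              sle_sum (f := fun a' => ∑ b', p x a' v b')
                (fun _ => Finset.sum_nonneg fun _ _ => hnn _ _ _ _) a
      have hXAV : 0 < pXAV x a v := by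
        rw [hpXAV]
        exact hp.trans_le (sle_sum (f := fun b' => p x a v b') (fun _ => hnn _ _ _ _) b)
      have hXBV : 0 < pXBV x b v := by
        rw [hpXBV]
        exact hp.trans_le (sle_sum (f := fun a' => p x a' v b) (fun _ => hnn _ _ _ _) a)
      have hBV : 0 < pBV b v := by rw [hindep]; exact mul_pos hB hV
      set Q : ℝ := pXAV x a v * pX x * pV v * pAB a b / (pXV x v * pA a) with hQdef
      have hQ : 0 < Q :=
        div_pos (mul_pos (mul_pos (mul_pos hXAV hX) hV) hAB) (mul_pos hXV hA)
      -- the basic identity p * pXV = pXBV * pXAV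
      have hid : p x a v b * pXV x v = pXBV x b v * pXAV x a v := by
        have h1 := hmarkov x a v b hX
        have h2 := hcond x b v hX
        apply mul_left_cancel₀ hX.ne'
        linear_combination pXV x v * h1 - pXAV x a v * h2
      have hu : 0 < pXBV x b v / (pX x * pBV b v) := div_pos hXBV (mul_pos hX hBV)
      have hw : 0 < pAB a b / (pA a * pB b) := div_pos hAB (mul_pos hA hB)
      have hratio : pXBV x b v / (pX x * pBV b v) / (pAB a b / (pA a * pB b))
          = p x a v b / Q := by
        rw [div_eq_div_iff hw.ne' hQ.ne', hQdef, hindep b v]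
        field_simp
        linear_combination -hid
      have hlogeq : Real.log (pXBV x b v / (pX x * pBV b v))
          - Real.log (pAB a b / (pA a * pB b)) = Real.log (p x a v b / Q) := by
        rw [← Real.log_div hu.ne' hw.ne', hratio]
      have hlb : 1 - Q / p x a v b ≤ Real.log (p x a v b / Q) := by
        have := Real.one_sub_inv_le_log_of_pos (div_pos hp hQ)
        rwa [inv_div] at this
      have h5 : p x a v b * (1 - Q / p x a v b) ≤ p x a v b * Real.log (p x a v b / Q) :=
        mul_le_mul_of_nonneg_left hlb hp.le
      have h6 : p x a v b * (1 - Q / p x a v b) = p x a v b - Q := by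
        field_simp
      have h7 : p x a v b * Real.log (p x a v b / Q)
          = p x a v b * Real.log (pXBV x b v / (pX x * pBV b v))
            - p x a v b * Real.log (pAB a b / (pA a * pB b)) := by
        rw [← hlogeq]; ring
      linarith
  -- sum of Q is at most 1
  have hqsum : ∑ x, ∑ a, ∑ v, ∑ b,
      pXAV x a v * pX x * pV v * pAB a b / (pXV x v * pA a) ≤ 1 := by
    have step1 : ∀ x a v, ∑ b, pXAV x a v * pX x * pV v * pAB a b / (pXV x v * pA a)
        = pXAV x a v * pX x * pV v / (pXV x v * pA a) * pA a := by
      intro x a v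
      calc ∑ b, pXAV x a v * pX x * pV v * pAB a b / (pXV x v * pA a)
          = ∑ b, pXAV x a v * pX x * pV v / (pXV x v * pA a) * pAB a b :=
            Finset.sum_congr rfl fun b _ => by ring
        _ = pXAV x a v * pX x * pV v / (pXV x v * pA a) * ∑ b, pAB a b :=
            (Finset.mul_sum _ _ _).symm
        _ = pXAV x a v * pX x * pV v / (pXV x v * pA a) * pA a := by rw [hABmarg a]
    have step2 : ∀ x a v, pXAV x a v * pX x * pV v / (pXV x v * pA a) * pA a
        ≤ pXAV x a v * pX x * pV v / pXV x v := by
      intro x a v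
      rcases (hAnn a).eq_or_lt with h0 | hA
      · rw [← h0, mul_zero]
        exact div_nonneg (mul_nonneg (mul_nonneg (hXAVnn x a v) (hXnn x)) (hVnn v))
          (hXVnn x v)
      · refine le_of_eq ?_
        rw [div_mul_eq_mul_div, mul_div_mul_right _ _ hA.ne']
    have step3 : ∀ x v, ∑ a, pXAV x a v * pX x * pV v / pXV x v
        = pX x * pV v / pXV x v * pXV x v := by
      intro x v
      rw [← hXVmarg x v, Finset.mul_sum]
      exact Finset.sum_congr rfl fun a _ => by ring
    have step4 : ∀ x v, pX x * pV v / pXV x v * pXV x v ≤ pX x * pV v := by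
      intro x v
      rcases (hXVnn x v).eq_or_lt with h0 | hXV
      · rw [← h0, mul_zero]
        exact mul_nonneg (hXnn x) (hVnn v)
      · rw [div_mul_cancel₀ _ hXV.ne']
    calc ∑ x, ∑ a, ∑ v, ∑ b, pXAV x a v * pX x * pV v * pAB a b / (pXV x v * pA a)
        = ∑ x, ∑ a, ∑ v, pXAV x a v * pX x * pV v / (pXV x v * pA a) * pA a :=
          Finset.sum_congr rfl fun x _ => Finset.sum_congr rfl fun a _ =>
            Finset.sum_congr rfl fun v _ => step1 x a v
      _ ≤ ∑ x, ∑ a, ∑ v, pXAV x a v * pX x * pV v / pXV x v :=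
          Finset.sum_le_sum fun x _ => Finset.sum_le_sum fun a _ =>
            Finset.sum_le_sum fun v _ => step2 x a v
      _ = ∑ x, ∑ v, ∑ a, pXAV x a v * pX x * pV v / pXV x v :=
          Finset.sum_congr rfl fun x _ => sw_sum _
      _ = ∑ x, ∑ v, pX x * pV v / pXV x v * pXV x v :=
          Finset.sum_congr rfl fun x _ => Finset.sum_congr rfl fun v _ => step3 x v
      _ ≤ ∑ x, ∑ v, pX x * pV v :=
          Finset.sum_le_sum fun x _ => Finset.sum_le_sum fun v _ => step4 x v
      _ = (∑ x, pX x) * (∑ v, pV v) := (Finset.sum_mul_sum _ _ _ _).symm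
      _ = 1 := by rw [hX1, hV1, mul_one]
  -- rewrite both sides as fourfold sums
  have hLHS : ∑ a, ∑ b, pAB a b * Real.log (pAB a b / (pA a * pB b))
      = ∑ x, ∑ a, ∑ v, ∑ b, p x a v b * Real.log (pAB a b / (pA a * pB b)) := by
    calc ∑ a, ∑ b, pAB a b * Real.log (pAB a b / (pA a * pB b))
        = ∑ a, ∑ b, ∑ x, ∑ v, p x a v b * Real.log (pAB a b / (pA a * pB b)) := by
          refine Finset.sum_congr rfl fun a _ => Finset.sum_congr rfl fun b _ => ?_
          rw [hpAB, Finset.sum_mul]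
          exact Finset.sum_congr rfl fun x _ => Finset.sum_mul _ _ _
      _ = ∑ a, ∑ x, ∑ b, ∑ v, p x a v b * Real.log (pAB a b / (pA a * pB b)) :=
          Finset.sum_congr rfl fun a _ => sw_sum _
      _ = ∑ x, ∑ a, ∑ b, ∑ v, p x a v b * Real.log (pAB a b / (pA a * pB b)) := sw_sum _
      _ = ∑ x, ∑ a, ∑ v, ∑ b, p x a v b * Real.log (pAB a b / (pA a * pB b)) :=
          Finset.sum_congr rfl fun x _ => Finset.sum_congr rfl fun a _ => sw_sum _
  have hRHS : ∑ x, ∑ b, ∑ v, pXBV x b v * Real.log (pXBV x b v / (pX x * pBV b v))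
      = ∑ x, ∑ a, ∑ v, ∑ b, p x a v b * Real.log (pXBV x b v / (pX x * pBV b v)) := by
    refine Finset.sum_congr rfl fun x _ => ?_
    calc ∑ b, ∑ v, pXBV x b v * Real.log (pXBV x b v / (pX x * pBV b v))
        = ∑ b, ∑ v, ∑ a, p x a v b * Real.log (pXBV x b v / (pX x * pBV b v)) := by
          refine Finset.sum_congr rfl fun b _ => Finset.sum_congr rfl fun v _ => ?_
          rw [hpXBV, Finset.sum_mul]
      _ = ∑ b, ∑ a, ∑ v, p x a v b * Real.log (pXBV x b v / (pX x * pBV b v)) :=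
          Finset.sum_congr rfl fun b _ => sw_sum _
      _ = ∑ a, ∑ b, ∑ v, p x a v b * Real.log (pXBV x b v / (pX x * pBV b v)) := sw_sum _
      _ = ∑ a, ∑ v, ∑ b, p x a v b * Real.log (pXBV x b v / (pX x * pBV b v)) :=
          Finset.sum_congr rfl fun a _ => sw_sum _
  rw [hLHS, hRHS]
  have hmain : (∑ x, ∑ a, ∑ v, ∑ b,
      (p x a v b * Real.log (pAB a b / (pA a * pB b)) +
        (p x a v b - pXAV x a v * pX x * pV v * pAB a b / (pXV x v * pA a))))
      ≤ ∑ x, ∑ a, ∑ v, ∑ b, p x a v b * Real.log (pXBV x b v / (pX x * pBV b v)) :=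
    Finset.sum_le_sum fun x _ => Finset.sum_le_sum fun a _ =>
      Finset.sum_le_sum fun v _ => Finset.sum_le_sum fun b _ => key x a v b
  have hdistr : (∑ x, ∑ a, ∑ v, ∑ b,
      (p x a v b * Real.log (pAB a b / (pA a * pB b)) +
        (p x a v b - pXAV x a v * pX x * pV v * pAB a b / (pXV x v * pA a))))
      = (∑ x, ∑ a, ∑ v, ∑ b, p x a v b * Real.log (pAB a b / (pA a * pB b)))
        + ((∑ x, ∑ a, ∑ v, ∑ b, p x a v b)
          - (∑ x, ∑ a, ∑ v, ∑ b, pXAV x a v * pX x * pV v * pAB a b / (pXV x v * pA a))) := by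
    simp only [Finset.sum_add_distrib, Finset.sum_sub_distrib]
  rw [hdistr, hsum] at hmain
  linarith
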